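/- Fix an integer S ≥ 2, a real ε with 0 < ε ≤ S⁻², and integers k, k' with 2 ≤ k < k' ≤ S. Define x^(k)(j) = (j-1)(1+ε)/k for 1 ≤ j < k, x^(k)(k) = 1 - (1+ε)/k, and y^(k)(j) = x^(k)(j) + (1+ε)/k. Then y^(k)(k-1) < x^(k')(k'); consequently the open intervals I^(k)(j) = (x^(k)(j), y^(k)(j)) for 1 ≤ j < k are disjoint from I^(k')(k') = (x^(k')(k'), y^(k')(k')). -/

import Mathlib

/-- Base point `x^(k)(j)` for `1 ≤ j ≤ k`. -/
noncomputable def xpt (ε : ℝ) (k j : ℕ) : ℝ :=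
  if j < k then ((j : ℝ) - 1) * (1 + ε) / k else 1 - (1 + ε) / k

/-- Upper point `y^(k)(j) = x^(k)(j) + (1+ε)/k`. -/
noncomputable def ypt (ε : ℝ) (k j : ℕ) : ℝ := xpt ε k j + (1 + ε) / k

theorem stmt_5 (S k k' : ℕ) (ε : ℝ) (hS : 2 ≤ S) (hε0 : 0 < ε) (hεS : ε ≤ 1 / (S : ℝ) ^ 2)
    (hk : 2 ≤ k) (hkk' : k < k') (hk'S : k' ≤ S) :
    ypt ε k (k - 1) < xpt ε k' k' ∧
    ∀ j : ℕ, 1 ≤ j → j < k →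
      Disjoint (Set.Ioo (xpt ε k j) (ypt ε k j)) (Set.Ioo (xpt ε k' k') (ypt ε k' k')) := by
  have hkR : (2:ℝ) ≤ (k:ℝ) := by exact_mod_cast hk
  have hk'R : (k:ℝ) + 1 ≤ (k':ℝ) := by exact_mod_cast hkk'
  have hSR : (k':ℝ) ≤ (S:ℝ) := by exact_mod_cast hk'S
  have hk0 : (0:ℝ) < k := by linarith
  have hk'0 : (0:ℝ) < k' := by linarith
  have hS0 : (0:ℝ) < S := by linarith
  have hεS2 : ε * (S:ℝ)^2 ≤ 1 := by
    have h2 : (0:ℝ) < (S:ℝ)^2 := by positivity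
    rw [le_div_iff₀ h2] at hεS
    linarith
  have hεkk' : ε * ((k:ℝ) * (k':ℝ)) ≤ 1 := by
    nlinarith [mul_pos hk0 hk'0]
  -- the key inequality
  have hmain : ypt ε k (k - 1) < xpt ε k' k' := by
    have h1 : k - 1 < k := by omega
    have h2 : ¬ (k' < k') := lt_irrefl _
    have hcast : ((k - 1 : ℕ) : ℝ) = (k:ℝ) - 1 := by
      have : 1 ≤ k := by omega
      push_cast [this]; ring
    rw [ypt, xpt, xpt, if_pos h1, if_neg h2, hcast]
    have h3 : 1 - (1+ε)/(k':ℝ) = ((k':ℝ) - (1+ε))/(k':ℝ) := by field_simp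
    rw [← add_div, h3, div_lt_div_iff₀ hk0 hk'0]
    nlinarith [hεkk', mul_pos hε0 hk'0, mul_pos hε0 hk0]
  refine ⟨hmain, ?_⟩
  intro j hj1 hjk
  rw [Set.disjoint_left]
  rintro x ⟨hx1, hx2⟩ ⟨hx3, hx4⟩
  have hyj : ypt ε k j ≤ ypt ε k (k - 1) := by
    have hjk1 : (j:ℝ) ≤ ((k-1:ℕ):ℝ) := by exact_mod_cast Nat.le_sub_one_of_lt hjk
    have h1 : k - 1 < k := by omega
    rw [ypt, ypt, xpt, xpt, if_pos h1, if_pos hjk]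
    have hε1 : (0:ℝ) < 1 + ε := by linarith
    gcongr
  linarith
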